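/- A nonadditive measure μ is autocontinuous from below if and only if the Fatou convergence-in-measure lemma holds for the Sugeno integral: for any sequence of measurable f_n ≥ 0 and measurable f ≥ 0 with f_n → f in μ-measure, one has Su(μ,f) ≤ liminf_n Su(μ,f_n). -/

import Mathlib

open scoped NNReal ENNReal
open ENNReal Filter Topology

variable {X : Type*} [MeasurableSpace X]

/-- The Sugeno integral of `g` w.r.t. a nonadditive measure `μ`:
`Su(μ,g) := sup_{t ∈ [0,∞)} min(t, μ({g > t}))`. -/
noncomputable def Su (μ : Set X → ℝ≥0∞) (g : X → ℝ≥0∞) : ℝ≥0∞ :=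
  ⨆ t : ℝ≥0, min (t : ℝ≥0∞) (μ {x | (t : ℝ≥0∞) < g x})

omit [MeasurableSpace X] in
lemma Su_set_eq (u : ℝ≥0) (h : X → ℝ) (_hnn : ∀ x, 0 ≤ h x) :
    {x : X | (u : ℝ≥0∞) < ENNReal.ofReal (h x)} = {x : X | (u : ℝ) < h x} := by
  ext x
  simp only [Set.mem_setOf_eq]
  rw [← ENNReal.ofReal_coe_nnreal,
    ENNReal.ofReal_lt_ofReal_iff_of_nonneg u.coe_nonneg]

/-- `μ` is autocontinuous from below iff the Fatou convergence-in-measure lemma holds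
for the Sugeno integral. -/
theorem autocontinuous_from_below_iff_fatou
    (μ : Set X → ℝ≥0∞) (h0 : μ ∅ = 0)
    (hmono : ∀ ⦃A B : Set X⦄, MeasurableSet A → MeasurableSet B → A ⊆ B → μ A ≤ μ B) :
    (∀ (A : Set X) (B : ℕ → Set X), MeasurableSet A → (∀ n, MeasurableSet (B n)) →
        Tendsto (fun n => μ (B n)) atTop (𝓝 0) →
        Tendsto (fun n => μ (A \ B n)) atTop (𝓝 (μ A))) ↔
      (∀ (f : ℕ → X → ℝ) (g : X → ℝ), (∀ n, Measurable (f n)) → Measurable g →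
        (∀ n x, 0 ≤ f n x) → (∀ x, 0 ≤ g x) →
        (∀ ε : ℝ, 0 < ε → Tendsto (fun n => μ {x | ε < |f n x - g x|}) atTop (𝓝 0)) →
        Su μ (fun x => ENNReal.ofReal (g x)) ≤
          Filter.liminf (fun n => Su μ (fun x => ENNReal.ofReal (f n x))) atTop) := by
  constructor
  · -- (⇒) autocontinuity implies Fatou
    intro hac f g hfm hgm hfnn hgnn hconv
    rw [Su]
    apply iSup_le
    intro t
    rw [Su_set_eq t g hgnn]
    set A : Set X := {x | (t : ℝ) < g x} with hAdef
    have hAmeas : MeasurableSet A := measurableSet_lt measurable_const hgm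
    apply ENNReal.le_of_forall_nnreal_lt
    intro r hr
    rw [lt_min_iff] at hr
    obtain ⟨hrt, hrA⟩ := hr
    have hrt' : r < t := by exact_mod_cast hrt
    set ε : ℝ≥0 := t - r with hεdef
    have hεpos : (0 : ℝ) < (ε : ℝ) := by
      have : (0:ℝ≥0) < ε := tsub_pos_of_lt hrt'
      exact_mod_cast this
    set B : ℕ → Set X := fun n => {x | (ε : ℝ) < |f n x - g x|} with hBdef
    have hBmeas : ∀ n, MeasurableSet (B n) := fun n =>
      measurableSet_lt measurable_const ((hfm n).sub hgm).abs
    have hten : Tendsto (fun n => μ (A \ B n)) atTop (𝓝 (μ A)) :=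
      hac A B hAmeas hBmeas (hconv ε hεpos)
    have hεcoe : (ε : ℝ) = (t : ℝ) - (r : ℝ) := by
      rw [hεdef, NNReal.coe_sub hrt'.le]
    have key : ∀ n, min (r : ℝ≥0∞) (μ (A \ B n)) ≤
        Su μ (fun x => ENNReal.ofReal (f n x)) := by
      intro n
      have hsub : A \ B n ⊆ {x : X | (r : ℝ) < f n x} := by
        rintro x ⟨hxA, hxB⟩
        simp only [hBdef, Set.mem_setOf_eq, not_lt] at hxB ⊢
        have hxA' : (t : ℝ) < g x := hxA
        have := abs_le.mp hxB
        rw [hεcoe] at this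
        linarith [this.1, hxA']
      calc min (r : ℝ≥0∞) (μ (A \ B n))
          ≤ min (r : ℝ≥0∞) (μ {x : X | (r : ℝ) < f n x}) :=
            min_le_min le_rfl
              (hmono (hAmeas.diff (hBmeas n))
                (measurableSet_lt measurable_const (hfm n)) hsub)
        _ ≤ Su μ (fun x => ENNReal.ofReal (f n x)) := by
            rw [Su]
            refine le_trans (le_of_eq ?_) (le_iSup _ r)
            rw [Su_set_eq r (f n) (hfnn n)]
    have hlim : Tendsto (fun n => min (r : ℝ≥0∞) (μ (A \ B n))) atTop
        (𝓝 (min (r : ℝ≥0∞) (μ A))) := Tendsto.min tendsto_const_nhds hten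
    have hmin : min (r : ℝ≥0∞) (μ A) = (r : ℝ≥0∞) := min_eq_left hrA.le
    calc (r : ℝ≥0∞) = liminf (fun n => min (r : ℝ≥0∞) (μ (A \ B n))) atTop := by
          rw [hlim.liminf_eq, hmin]
      _ ≤ liminf (fun n => Su μ (fun x => ENNReal.ofReal (f n x))) atTop :=
          liminf_le_liminf (Eventually.of_forall key)
  · -- (⇐) Fatou implies autocontinuity
    intro hF A B hA hB hμB
    refine tendsto_of_le_liminf_of_limsup_le ?_ ?_
    · apply ENNReal.le_of_forall_nnreal_lt
      intro r hr
      set c : ℝ≥0 := r + 1 with hcdef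
      have hrc : (r : ℝ) < (c : ℝ) := by
        simp [hcdef]
      set g : X → ℝ := Set.indicator A (fun _ => (c : ℝ)) with hgdef
      set f : ℕ → X → ℝ := fun n => Set.indicator (A \ B n) (fun _ => (c : ℝ)) with hfdef
      have hgm : Measurable g := measurable_const.indicator hA
      have hfm : ∀ n, Measurable (f n) := fun n =>
        measurable_const.indicator (hA.diff (hB n))
      have hgnn : ∀ x, 0 ≤ g x := fun x => Set.indicator_nonneg (fun _ _ => c.coe_nonneg) x
      have hfnn : ∀ n x, 0 ≤ f n x := fun n x =>
        Set.indicator_nonneg (fun _ _ => c.coe_nonneg) x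
      have hconv : ∀ ε : ℝ, 0 < ε →
          Tendsto (fun n => μ {x | ε < |f n x - g x|}) atTop (𝓝 0) := by
        intro ε hε
        have hsub : ∀ n, {x | ε < |f n x - g x|} ⊆ B n := by
          intro n x hx
          simp only [Set.mem_setOf_eq] at hx
          by_contra hxB
          have hfg : f n x = g x := by
            by_cases hxA : x ∈ A
            · simp [hfdef, hgdef, Set.indicator_of_mem, hxA,
                Set.indicator_of_mem (Set.mem_diff_of_mem hxA hxB)]
            · have : x ∉ A \ B n := fun h => hxA h.1
              simp [hfdef, hgdef, Set.indicator_of_notMem, hxA, this]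
          rw [hfg, sub_self, abs_zero] at hx
          linarith
        have hsetm : ∀ n, MeasurableSet {x | ε < |f n x - g x|} := fun n =>
          measurableSet_lt measurable_const ((hfm n).sub hgm).abs
        exact tendsto_of_tendsto_of_tendsto_of_le_of_le tendsto_const_nhds hμB
          (fun n => zero_le) (fun n => hmono (hsetm n) (hB n) (hsub n))
      have h1 := hF f g hfm hgm hfnn hgnn hconv
      have hgset : {x : X | (r : ℝ≥0∞) < ENNReal.ofReal (g x)} = A := by
        ext x
        by_cases hxA : x ∈ A
        · simp [hgdef, Set.indicator_of_mem, hxA, ENNReal.ofReal_coe_nnreal,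
            ENNReal.coe_lt_coe, show r < c by exact_mod_cast hrc]
        · simp [hgdef, Set.indicator_of_notMem, hxA]
      have hrSu : (r : ℝ≥0∞) ≤ Su μ (fun x => ENNReal.ofReal (g x)) := by
        rw [Su]
        refine le_trans ?_ (le_iSup _ r)
        rw [hgset]
        exact le_min le_rfl hr.le
      have h2 : ∀ n, Su μ (fun x => ENNReal.ofReal (f n x)) ≤ μ (A \ B n) := by
        intro n
        rw [Su]
        apply iSup_le
        intro t
        by_cases ht : (t : ℝ≥0∞) < (c : ℝ≥0∞)
        · have : {x : X | (t : ℝ≥0∞) < ENNReal.ofReal (f n x)} = A \ B n := by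
            ext x
            by_cases hx : x ∈ A \ B n
            · simp [hfdef, Set.indicator_of_mem, hx, ENNReal.ofReal_coe_nnreal, ht, ENNReal.coe_lt_coe.mp ht]
            · simp [hfdef, Set.indicator_of_notMem, hx]
          rw [this]
          exact min_le_right _ _
        · have : {x : X | (t : ℝ≥0∞) < ENNReal.ofReal (f n x)} = ∅ := by
            ext x
            by_cases hx : x ∈ A \ B n
            · simp [hfdef, Set.indicator_of_mem, hx, ENNReal.ofReal_coe_nnreal, ht, le_of_not_gt (fun h => ht (ENNReal.coe_lt_coe.mpr h))]
            · simp [hfdef, Set.indicator_of_notMem, hx]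
          rw [this, h0]
          simp
      calc (r : ℝ≥0∞) ≤ Su μ (fun x => ENNReal.ofReal (g x)) := hrSu
        _ ≤ liminf (fun n => Su μ (fun x => ENNReal.ofReal (f n x))) atTop := h1
        _ ≤ liminf (fun n => μ (A \ B n)) atTop :=
            liminf_le_liminf (Eventually.of_forall h2)
    · exact limsup_le_of_le (by isBoundedDefault)
        (Eventually.of_forall fun n => hmono (hA.diff (hB n)) hA Set.diff_subset)
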